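/- Let V be a vector space of dimension at least 3 over the finite field F_q (q odd) with a nondegenerate symmetric bilinear form, let l be a nondegenerate 2-dimensional subspace and ⟨a⟩ a nondegenerate 1-dimensional subspace not contained in l with ⟨a⟩ + l 3-dimensional. Then at least q − 3 of the nondegenerate 1-dimensional subspaces of l span a nondegenerate 2-dimensional subspace together with ⟨a⟩. -/

import Mathlib

open Module

open Polynomial in
private lemma quad_bad_ncard {F : Type*} [Field F] (α β γ : F)
    (h : ¬(α = 0 ∧ β = 0 ∧ γ = 0)) :
    Set.ncard {z : Option F | z.elim γ (fun t => α + β * t + γ * t ^ 2) = 0} ≤ 2 := by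
  classical
  by_cases hγ : γ = 0
  · subst hγ
    by_cases hβ : β = 0
    · subst hβ
      have hα : α ≠ 0 := by tauto
      have : {z : Option F | z.elim 0 (fun t => α + 0 * t + 0 * t ^ 2) = 0} = {none} := by
        ext z; cases z <;> simp [hα]
      rw [this, Set.ncard_singleton]; omega
    · have hsub : {z : Option F | z.elim 0 (fun t => α + β * t + 0 * t ^ 2) = 0}
          ⊆ {none, some (-α / β)} := by
        intro z hz
        cases z with
        | none => exact Set.mem_insert _ _
        | some t =>
          simp only [Set.mem_setOf_eq, Option.elim] at hz
          have : t = -α / β := by rw [eq_div_iff hβ]; linear_combination hz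
          simp [this]
      calc Set.ncard _ ≤ Set.ncard ({none, some (-α / β)} : Set (Option F)) :=
            Set.ncard_le_ncard hsub ((Set.finite_singleton _).insert _)
        _ ≤ Set.ncard ({some (-α / β)} : Set (Option F)) + 1 := Set.ncard_insert_le _ _
        _ ≤ 2 := by rw [Set.ncard_singleton]
  · set p : F[X] := C γ * X ^ 2 + C β * X + C α with hp
    have hdeg : p.natDegree = 2 := natDegree_quadratic hγ
    have hp0 : p ≠ 0 := fun h0 => by simp [h0] at hdeg
    have hsub : {z : Option F | z.elim γ (fun t => α + β * t + γ * t ^ 2) = 0}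
        ⊆ some '' (p.roots.toFinset : Set F) := by
      intro z hz
      cases z with
      | none => exact absurd hz hγ
      | some t =>
        simp only [Set.mem_setOf_eq, Option.elim] at hz
        refine ⟨t, ?_, rfl⟩
        simp only [Finset.coe_sort_coe, Multiset.mem_toFinset, Finset.mem_coe]
        rw [mem_roots hp0]
        simp only [IsRoot.def, hp, eval_add, eval_mul, eval_C, eval_X, eval_pow]
        linear_combination hz
    calc Set.ncard _ ≤ Set.ncard (some '' (p.roots.toFinset : Set F)) :=
          Set.ncard_le_ncard hsub ((p.roots.toFinset : Set F).toFinite.image _)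
      _ = Set.ncard (p.roots.toFinset : Set F) :=
          Set.ncard_image_of_injective _ (Option.some_injective F)
      _ = p.roots.toFinset.card := Set.ncard_coe_finset _
      _ ≤ Multiset.card p.roots := Multiset.toFinset_card_le _
      _ ≤ p.natDegree := p.card_roots'
      _ ≤ 2 := by omega

theorem point_line_at_least_q_sub_three_collinear
    {F V : Type*} [Field F] [Fintype F] [AddCommGroup V] [Module F V]
    (q : ℕ) (hq : Fintype.card F = q) (hodd : Odd q) (hdim : 3 ≤ finrank F V)
    (B : LinearMap.BilinForm F V) (hsymm : B.IsSymm) (hB : B.Nondegenerate)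
    (l : Submodule F V) (hl2 : finrank F l = 2) (hl : (B.restrict l).Nondegenerate)
    (a : V) (ha : B a a ≠ 0) (hal : a ∉ l)
    (h3 : finrank F (Submodule.span F {a} ⊔ l : Submodule F V) = 3) :
    q - 3 ≤ Set.ncard {P : Submodule F V | P ≤ l ∧ finrank F P = 1 ∧
      (B.restrict P).Nondegenerate ∧
      finrank F (Submodule.span F {a} ⊔ P : Submodule F V) = 2 ∧
      (B.restrict (Submodule.span F {a} ⊔ P)).Nondegenerate} := by
  classical
  haveI hVfd : FiniteDimensional F V := FiniteDimensional.of_finrank_pos (by omega)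
  -- characteristic is odd
  have h2 : (2 : F) ≠ 0 := by
    intro h20
    obtain ⟨p, hp⟩ := CharP.exists F
    haveI := hp
    have hpprime : p.Prime := CharP.char_is_prime F p
    have hpdvd : p ∣ 2 := (CharP.cast_eq_zero_iff F p 2).mp (by exact_mod_cast h20)
    have hp2 : p = 2 := ((Nat.prime_dvd_prime_iff_eq hpprime Nat.prime_two).mp hpdvd)
    obtain ⟨n, -, hcard⟩ := @FiniteField.card F _ _ p hp
    rw [hq, hp2] at hcard
    have : Even q := by
      rw [hcard]
      exact (Nat.even_pow' (by positivity)).mpr even_two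
    exact (Nat.not_even_iff_odd.mpr hodd) this
  -- a basis of l
  set e : Basis (Fin 2) F l := Module.finBasisOfFinrankEq F l hl2 with he
  set v0 : V := (e 0 : V) with hv0
  set v1 : V := (e 1 : V) with hv1
  have hv0l : v0 ∈ l := (e 0).2
  have hv1l : v1 ∈ l := (e 1).2
  have hind : LinearIndependent F fun i => ((e i : l) : V) :=
    e.linearIndependent.map' l.subtype (Submodule.ker_subtype l)
  have hpair : ∀ x y : F, x • v0 + y • v1 = 0 → x = 0 ∧ y = 0 := by
    intro x y hxy
    have h := Fintype.linearIndependent_iff.mp hind ![x, y] (by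
      simpa [Fin.sum_univ_two] using hxy)
    exact ⟨h 0, h 1⟩
  have hv0ne : v0 ≠ 0 := by
    intro h0
    exact one_ne_zero ((hpair 1 0 (by simp [h0])).1)
  have hv1ne : v1 ≠ 0 := by
    intro h0
    exact one_ne_zero ((hpair 0 1 (by simp [h0])).2)
  have hlspan : ∀ m ∈ l, ∃ x y : F, x • v0 + y • v1 = m := by
    intro m hm
    refine ⟨e.repr ⟨m, hm⟩ 0, e.repr ⟨m, hm⟩ 1, ?_⟩
    have h := e.sum_repr ⟨m, hm⟩
    have h2 := congrArg (Subtype.val) h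
    simp only [Fin.sum_univ_two, Submodule.coe_add, Submodule.coe_smul] at h2; exact h2
  -- nondegeneracy of B on l in terms of the basis
  have hlzero : ∀ m ∈ l, B m v0 = 0 → B m v1 = 0 → m = 0 := by
    intro m hm h0 h1
    have hres : (⟨m, hm⟩ : l) = 0 := by
      refine hl.1 ⟨m, hm⟩ (fun n => ?_)
      obtain ⟨x, y, hxy⟩ := hlspan n.1 n.2
      show B m n.1 = 0
      rw [← hxy]
      simp [map_add, map_smul, h0, h1]
    exact congrArg Subtype.val hres
  -- the family of vectors
  set w : Option F → V := fun z => z.elim v1 (fun t => v0 + t • v1) with hw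
  have hwl : ∀ z, w z ∈ l := by
    intro z
    cases z with
    | none => exact hv1l
    | some t => exact l.add_mem hv0l (l.smul_mem t hv1l)
  have hwne : ∀ z, w z ≠ 0 := by
    intro z h0
    cases z with
    | none => exact hv1ne h0
    | some t => exact one_ne_zero ((hpair 1 t (by have h0' : v0 + t • v1 = 0 := h0; simpa using h0')).1)
  set L : Option F → Submodule F V := fun z => Submodule.span F {w z} with hL
  -- injectivity of L
  have hLinj : Function.Injective L := by
    intro z z' hzz
    have hmem : w z ∈ L z' := hzz ▸ Submodule.mem_span_singleton_self (w z)
    obtain ⟨c, hc⟩ := Submodule.mem_span_singleton.mp hmem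
    cases z with
    | none =>
      cases z' with
      | none => rfl
      | some t =>
        exfalso
        have hc' : c • (v0 + t • v1) = v1 := hc
        have hcp := hpair c (c * t - 1) (by
          have heq : c • v0 + (c * t - 1) • v1 = c • (v0 + t • v1) - v1 := by
            rw [smul_add, smul_smul, sub_smul, one_smul]; abel
          rw [heq, hc']; simp)
        have hc0 : c = 0 := hcp.1
        have h1 : c * t - 1 = 0 := hcp.2
        rw [hc0, zero_mul] at h1
        norm_num at h1
    | some t =>
      cases z' with
      | none =>
        exfalso
        have hc' : c • v1 = v0 + t • v1 := hc
        have hcp := hpair 1 (t - c) (by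
          have heq : (1:F) • v0 + (t - c) • v1 = (v0 + t • v1) - c • v1 := by
            rw [one_smul, sub_smul]; abel
          rw [heq, ← hc']; simp)
        exact one_ne_zero hcp.1
      | some t' =>
        have hc' : c • (v0 + t' • v1) = v0 + t • v1 := hc
        have hcp := hpair (c - 1) (c * t' - t) (by
          have heq : (c - 1) • v0 + (c * t' - t) • v1
              = c • (v0 + t' • v1) - (v0 + t • v1) := by
            rw [smul_add, smul_smul, sub_smul, sub_smul, one_smul]; abel
          rw [heq, hc']; simp)
        have hc1 : c = 1 := by linear_combination hcp.1
        have htt : t = t' := by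
          have h := hcp.2; rw [hc1, one_mul] at h; linear_combination -h
        rw [htt]
  have hsym10 : B v1 v0 = B v0 v1 := hsymm.eq v1 v0
  have hsymwa : ∀ v : V, B v a = B a v := fun v => (hsymm.eq v a)
  have hGram : ¬(B v0 v0 = 0 ∧ B v0 v1 = 0 ∧ B v1 v1 = 0) := by
    rintro ⟨h00, h01, h11⟩
    exact hv0ne (hlzero v0 hv0l h00 h01)
  -- quadratic values
  have hQval : ∀ z, B (w z) (w z) =
      z.elim (B v1 v1) (fun t => B v0 v0 + (2 * B v0 v1) * t + (B v1 v1) * t ^ 2) := by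
    intro z
    cases z with
    | none => rfl
    | some t =>
      show B (v0 + t • v1) (v0 + t • v1)
          = B v0 v0 + (2 * B v0 v1) * t + (B v1 v1) * t ^ 2
      simp only [map_add, map_smul, LinearMap.add_apply, LinearMap.smul_apply,
        smul_eq_mul, hsym10]
      ring
  have hDval : ∀ z, B a a * B (w z) (w z) - B a (w z) * B a (w z) =
      z.elim (B a a * B v1 v1 - B a v1 * B a v1)
        (fun t => (B a a * B v0 v0 - B a v0 * B a v0)
          + (2 * (B a a * B v0 v1 - B a v0 * B a v1)) * t
          + (B a a * B v1 v1 - B a v1 * B a v1) * t ^ 2) := by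
    intro z
    cases z with
    | none => rfl
    | some t =>
      show B a a * B (v0 + t • v1) (v0 + t • v1) - B a (v0 + t • v1) * B a (v0 + t • v1)
          = (B a a * B v0 v0 - B a v0 * B a v0)
            + (2 * (B a a * B v0 v1 - B a v0 * B a v1)) * t
            + (B a a * B v1 v1 - B a v1 * B a v1) * t ^ 2
      simp only [map_add, map_smul, LinearMap.add_apply, LinearMap.smul_apply,
        smul_eq_mul, hsym10]
      ring
  -- the two bad sets
  set Bad1 : Set (Option F) := {z | B (w z) (w z) = 0} with hBad1
  set Bad2 : Set (Option F) := {z | B a a * B (w z) (w z) - B a (w z) * B a (w z) = 0} with hBad2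
  have hB1 : Bad1.ncard ≤ 2 := by
    have : Bad1 = {z : Option F |
        z.elim (B v1 v1) (fun t => B v0 v0 + (2 * B v0 v1) * t + (B v1 v1) * t ^ 2) = 0} := by
      ext z; simp only [hBad1, Set.mem_setOf_eq, hQval z]
    rw [this]
    refine quad_bad_ncard _ _ _ ?_
    rintro ⟨h00, h01, h11⟩
    have h01' : B v0 v1 = 0 := by
      rcases mul_eq_zero.mp h01 with h | h
      · exact absurd h h2
      · exact h
    exact hGram ⟨h00, h01', h11⟩
  have hB2 : Bad2.ncard ≤ 2 := by
    have : Bad2 = {z : Option F |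
        z.elim (B a a * B v1 v1 - B a v1 * B a v1)
          (fun t => (B a a * B v0 v0 - B a v0 * B a v0)
            + (2 * (B a a * B v0 v1 - B a v0 * B a v1)) * t
            + (B a a * B v1 v1 - B a v1 * B a v1) * t ^ 2) = 0} := by
      ext z; simp only [hBad2, Set.mem_setOf_eq, hDval z]
    rw [this]
    refine quad_bad_ncard _ _ _ ?_
    rintro ⟨hα, hβ, hγ⟩
    have hβ' : B a a * B v0 v1 - B a v0 * B a v1 = 0 := by
      rcases mul_eq_zero.mp hβ with h | h
      · exact absurd h h2
      · exact h
    have hp'l : B a v1 • v0 - B a v0 • v1 ∈ l :=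
      l.sub_mem (l.smul_mem _ hv0l) (l.smul_mem _ hv1l)
    have hp'0 : B (B a v1 • v0 - B a v0 • v1) v0 = 0 := by
      have hexp : B (B a v1 • v0 - B a v0 • v1) v0 = B a v1 * B v0 v0 - B a v0 * B v0 v1 := by
        simp only [map_sub, map_smul, LinearMap.sub_apply, LinearMap.smul_apply,
          smul_eq_mul, hsym10]
      have hkey : B a a * (B a v1 * B v0 v0 - B a v0 * B v0 v1) = 0 := by
        linear_combination B a v1 * hα - B a v0 * hβ'
      rw [hexp]
      rcases mul_eq_zero.mp hkey with h | h
      · exact absurd h ha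
      · exact h
    have hp'1 : B (B a v1 • v0 - B a v0 • v1) v1 = 0 := by
      have hexp : B (B a v1 • v0 - B a v0 • v1) v1 = B a v1 * B v0 v1 - B a v0 * B v1 v1 := by
        simp only [map_sub, map_smul, LinearMap.sub_apply, LinearMap.smul_apply,
          smul_eq_mul, hsym10]
      have hkey : B a a * (B a v1 * B v0 v1 - B a v0 * B v1 v1) = 0 := by
        linear_combination B a v1 * hβ' - B a v0 * hγ
      rw [hexp]
      rcases mul_eq_zero.mp hkey with h | h
      · exact absurd h ha
      · exact h
    have hp'z : B a v1 • v0 - B a v0 • v1 = 0 := hlzero _ hp'l hp'0 hp'1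
    have hss := hpair (B a v1) (-(B a v0)) (by rw [neg_smul, ← sub_eq_add_neg]; exact hp'z)
    have hs1z : B a v1 = 0 := hss.1
    have hs0z : B a v0 = 0 := neg_eq_zero.mp hss.2
    have h00 : B v0 v0 = 0 := by
      have hkey : B a a * B v0 v0 = 0 := by linear_combination hα + B a v0 * hs0z
      rcases mul_eq_zero.mp hkey with h | h
      · exact absurd h ha
      · exact h
    have h11 : B v1 v1 = 0 := by
      have hkey : B a a * B v1 v1 = 0 := by linear_combination hγ + B a v1 * hs1z
      rcases mul_eq_zero.mp hkey with h | h
      · exact absurd h ha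
      · exact h
    have h01 : B v0 v1 = 0 := by
      have hkey : B a a * B v0 v1 = 0 := by linear_combination hβ' + B a v1 * hs0z
      rcases mul_eq_zero.mp hkey with h | h
      · exact absurd h ha
      · exact h
    exact hGram ⟨h00, h01, h11⟩
  -- the good set
  set G : Set (Option F) := (Bad1 ∪ Bad2)ᶜ with hG
  have hGcard : q - 3 ≤ G.ncard := by
    show q - 3 ≤ ((Bad1 ∪ Bad2)ᶜ).ncard
    have hcompl := Set.ncard_add_ncard_compl (Bad1 ∪ Bad2)
    have hcard : Nat.card (Option F) = q + 1 := by
      rw [Nat.card_eq_fintype_card, Fintype.card_option, hq]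
    have hun : (Bad1 ∪ Bad2).ncard ≤ 4 := le_trans (Set.ncard_union_le _ _) (by omega)
    omega
  -- properties of lines from good parameters
  have hgood : ∀ z ∈ G, L z ∈ {P : Submodule F V | P ≤ l ∧ finrank F P = 1 ∧
      (B.restrict P).Nondegenerate ∧
      finrank F (Submodule.span F {a} ⊔ P : Submodule F V) = 2 ∧
      (B.restrict (Submodule.span F {a} ⊔ P)).Nondegenerate} := by
    intro z hz
    simp only [hG, Set.mem_compl_iff, Set.mem_union, hBad1, hBad2, Set.mem_setOf_eq,
      not_or] at hz
    obtain ⟨hQ, hD⟩ := hz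
    set u : V := w z with hu
    have hul : u ∈ l := hwl z
    have hune : u ≠ 0 := hwne z
    have hua : ∀ x y : F, x • a + y • u = 0 → x = 0 ∧ y = 0 := by
      intro x y hxy
      have hx0 : x = 0 := by
        by_contra hx
        have hxa : x • a = -(y • u) := eq_neg_of_add_eq_zero_left hxy
        have haeq : a = (-(x⁻¹ * y)) • u := by
          calc a = x⁻¹ • (x • a) := by rw [smul_smul, inv_mul_cancel₀ hx, one_smul]
            _ = x⁻¹ • (-(y • u)) := by rw [hxa]
            _ = (-(x⁻¹ * y)) • u := by rw [smul_neg, smul_smul, neg_smul]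
        exact hal (haeq ▸ l.smul_mem _ hul)
      refine ⟨hx0, ?_⟩
      rw [hx0, zero_smul, zero_add] at hxy
      exact (smul_eq_zero.mp hxy).resolve_right hune
    constructor
    · -- L z ≤ l
      exact Submodule.span_le.mpr (Set.singleton_subset_iff.mpr hul)
    refine ⟨finrank_span_singleton hune, ?_, ?_, ?_⟩
    · -- restriction to the point nondegenerate
      refine (LinearMap.IsRefl.nondegenerate_iff_separatingLeft (B := B.restrict _)
        (fun x y h => (hsymm.eq y.1 x.1).trans h)).mpr ?_
      intro m hm
      obtain ⟨c, hc⟩ := Submodule.mem_span_singleton.mp m.2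
      have hmu := hm ⟨u, Submodule.mem_span_singleton_self u⟩
      have : B m.1 u = 0 := hmu
      rw [← hc] at this
      simp only [map_smul, LinearMap.smul_apply, smul_eq_mul] at this
      have hc0 : c = 0 := (mul_eq_zero.mp this).resolve_right hQ
      apply Subtype.ext
      rw [← hc, hc0, zero_smul]
      rfl
    · -- dimension of the plane
      have hspanpair : Submodule.span F {a} ⊔ Submodule.span F {u} =
          Submodule.span F {a, u} := by
        rw [← Submodule.span_union, Set.singleton_union]
      rw [hspanpair]
      have hli : LinearIndependent F ![a, u] := LinearIndependent.pair_iff.mpr hua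
      have := finrank_span_eq_card hli
      rwa [Matrix.range_cons_cons_empty, Fintype.card_fin] at this
    · -- restriction to the plane nondegenerate
      have hspanpair : Submodule.span F {a} ⊔ Submodule.span F {u} =
          Submodule.span F {a, u} := by
        rw [← Submodule.span_union, Set.singleton_union]
      rw [hspanpair]
      refine (LinearMap.IsRefl.nondegenerate_iff_separatingLeft (B := B.restrict _)
        (fun x y h => (hsymm.eq y.1 x.1).trans h)).mpr ?_
      intro m hm
      obtain ⟨x, y, hxy⟩ := Submodule.mem_span_pair.mp m.2
      have hma : B m.1 a = 0 :=
        hm ⟨a, Submodule.subset_span (Set.mem_insert _ _)⟩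
      have hmu : B m.1 u = 0 :=
        hm ⟨u, Submodule.subset_span (Set.mem_insert_of_mem _ rfl)⟩
      rw [← hxy] at hma hmu
      simp only [map_add, map_smul, LinearMap.add_apply, LinearMap.smul_apply,
        smul_eq_mul] at hma hmu
      rw [hsymwa u] at hma
      have hma' : x * B a a + y * B a u = 0 := hma
      have hmu' : x * B a u + y * B u u = 0 := hmu
      have hx : x * (B a a * B u u - B a u * B a u) = 0 := by
        linear_combination B u u * hma' - B a u * hmu'
      have hx0 : x = 0 := (mul_eq_zero.mp hx).resolve_right hD
      have hy0 : y = 0 := by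
        rw [hx0, zero_mul, zero_add] at hma' hmu'
        by_contra hy
        have hau : B a u = 0 := (mul_eq_zero.mp hma').resolve_left hy
        have huu : B u u = 0 := (mul_eq_zero.mp hmu').resolve_left hy
        apply hD
        rw [hau, huu]; ring
      apply Subtype.ext
      rw [← hxy, hx0, hy0, zero_smul, zero_smul, add_zero]
      rfl
  -- conclusion
  haveI : Finite V := Module.finite_of_finite F
  haveI : Finite (Submodule F V) :=
    Finite.of_injective (fun P : Submodule F V => (P : Set V)) SetLike.coe_injective
  calc q - 3 ≤ G.ncard := hGcard
    _ = (L '' G).ncard := (Set.ncard_image_of_injOn (hLinj.injOn)).symm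
    _ ≤ _ := Set.ncard_le_ncard (fun P ⟨z, hzG, hzP⟩ => hzP ▸ hgood z hzG) (Set.toFinite _)
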